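/- In the hyperboloid model, if l̄₁, l̄₂ ∈ 𝕃 are polar vectors of two horospheres L₁, L₂ with distinct centers, then ⟨l̄₁, l̄₂⟩ = −2e^{dist(L₁,L₂)}, where dist(L₁,L₂) is the signed length of the common perpendicular (negative if the horospheres intersect). -/
import Mathlib


/-- The Minkowski bilinear form on `ℝ^{1,3}`. -/
def mink4 (x y : Fin 4 → ℝ) : ℝ := -(x 0 * y 0) + x 1 * y 1 + x 2 * y 2 + x 3 * y 3

lemma mink4_comm (x y : Fin 4 → ℝ) : mink4 x y = mink4 y x := by unfold mink4; ring

lemma mink4_bil (a b : ℝ) (x y z : Fin 4 → ℝ) :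
    mink4 (a • x + b • y) z = a * mink4 x z + b * mink4 y z := by
  simp [mink4, Pi.add_apply, Pi.smul_apply, smul_eq_mul]; ring

lemma mink4_expand (a b c d : ℝ) (x y : Fin 4 → ℝ) :
    mink4 (a • x + b • y) (c • x + d • y)
      = a*c*mink4 x x + (a*d + b*c)*mink4 x y + b*d*mink4 y y := by
  simp [mink4, Pi.add_apply, Pi.smul_apply, smul_eq_mul]; ring

/-- Pure real-number endgame. -/
lemma horo_endgame (s r : ℝ) (hs0 : s ≠ 0)
    (hc2 : Real.cosh r * (4*s) = -(s^2) - 4)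
    (hsign' : 0 ≤ r ↔ s ≤ -2) : s = -2 * Real.exp r := by
  have hcosh1 := Real.one_le_cosh r
  have hneg : s < 0 := by
    rcases lt_or_gt_of_ne hs0 with h | h
    · exact h
    · have h4s : (0:ℝ) ≤ 4*s := by linarith
      have := mul_le_mul_of_nonneg_right hcosh1 h4s
      nlinarith [hc2, sq_nonneg s]
  have he : Real.exp r ≠ 0 := (Real.exp_pos r).ne'
  have hepos : 0 < Real.exp r := Real.exp_pos r
  have hcosh : Real.cosh r = (Real.exp r + (Real.exp r)⁻¹)/2 := by
    rw [Real.cosh_eq, Real.exp_neg]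
  rw [hcosh] at hc2
  have key : (2*Real.exp r + s) * (Real.exp r * s + 2) = 0 := by
    field_simp at hc2
    nlinarith [hc2]
  rcases mul_eq_zero.mp key with h | h
  · linarith
  · by_cases hcase : s ≤ -2
    · have hr0 : 0 ≤ r := hsign'.mpr hcase
      have he1 : 1 ≤ Real.exp r := Real.one_le_exp hr0
      have hsge : -2 ≤ s := by nlinarith
      have hseq : s = -2 := le_antisymm hcase hsge
      have heeq : Real.exp r = 1 := by rw [hseq] at h; linarith
      rw [hseq, heeq]; ring
    · have hr0 : r < 0 := by
        by_contra hcon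
        exact hcase (hsign'.mp (le_of_not_gt hcon))
      have he1 : Real.exp r < 1 := Real.exp_lt_one_iff.mpr hr0
      nlinarith


/-- In the hyperboloid model, for the polar vectors `l₁, l₂ ∈ 𝕃` of two horospheres with
distinct centers, `⟨l₁, l₂⟩ = -2 e^{dist(L₁, L₂)}`.  The signed distance `r` is the signed
length of the common perpendicular: `p` and `q` are the intersections of the geodesic
through the two ideal centers with the horospheres `L₁` and `L₂`, `cosh r = -⟨p, q⟩`, and
`r ≥ 0` iff `p` is not inside the open horoball bounded by `L₂`. -/
theorem dist_two_horospheres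
    (l₁ l₂ p q : Fin 4 → ℝ) (r : ℝ)
    (hl₁ : mink4 l₁ l₁ = 0) (hl₁0 : 0 < l₁ 0)
    (hl₂ : mink4 l₂ l₂ = 0) (hl₂0 : 0 < l₂ 0)
    (hind : ¬ ∃ t : ℝ, l₂ = t • l₁)
    (hp : mink4 p p = -1) (hp0 : 0 < p 0) (hpL : mink4 p l₁ = -1)
    (hpgeo : ∃ μ ν : ℝ, p = μ • l₁ + ν • l₂)
    (hq : mink4 q q = -1) (hq0 : 0 < q 0) (hqL : mink4 q l₂ = -1)
    (hqgeo : ∃ μ ν : ℝ, q = μ • l₁ + ν • l₂)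
    (hr : Real.cosh r = -(mink4 p q))
    (hsign : 0 ≤ r ↔ mink4 p l₂ ≤ -1) :
    mink4 l₁ l₂ = -2 * Real.exp r := by
  obtain ⟨μ, ν, hpe⟩ := hpgeo
  obtain ⟨α, β, hqe⟩ := hqgeo
  set s := mink4 l₁ l₂ with hsdef
  have e1 : μ * mink4 l₁ l₁ + ν * mink4 l₂ l₁ = -1 := by
    rw [← mink4_bil, ← hpe]; exact hpL
  rw [hl₁, mink4_comm l₂ l₁, ← hsdef] at e1
  have e2 : μ*μ*mink4 l₁ l₁ + (μ*ν + ν*μ)*mink4 l₁ l₂ + ν*ν*mink4 l₂ l₂ = -1 := by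
    rw [← mink4_expand, ← hpe]; exact hp
  rw [hl₁, hl₂, ← hsdef] at e2
  have e3 : α * mink4 l₁ l₂ + β * mink4 l₂ l₂ = -1 := by
    rw [← mink4_bil, ← hqe]; exact hqL
  rw [hl₂, ← hsdef] at e3
  have e4 : α*α*mink4 l₁ l₁ + (α*β + β*α)*mink4 l₁ l₂ + β*β*mink4 l₂ l₂ = -1 := by
    rw [← mink4_expand, ← hqe]; exact hq
  rw [hl₁, hl₂, ← hsdef] at e4
  have hνs : ν * s = -1 := by linarith
  have hαs : α * s = -1 := by linarith
  have hμ : μ = 1/2 := by linear_combination (-1/2)*e2 + μ*hνs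
  have hβ : β = 1/2 := by linear_combination (-1/2)*e4 + β*hαs
  have hs0 : s ≠ 0 := by
    intro h; rw [h, mul_zero] at hνs; norm_num at hνs
  have hpq : mink4 p q = μ*α*mink4 l₁ l₁ + (μ*β + ν*α)*mink4 l₁ l₂ + ν*β*mink4 l₂ l₂ := by
    rw [hpe, hqe, mink4_expand]
  rw [hl₁, hl₂, ← hsdef] at hpq
  have hc2 : Real.cosh r * (4*s) = -(s^2) - 4 := by
    rw [hr, hpq, hμ, hβ]
    linear_combination (-4*α*s)*hνs + 4*hαs
  have hpl2 : mink4 p l₂ = s/2 := by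
    have h5 : mink4 p l₂ = μ * mink4 l₁ l₂ + ν * mink4 l₂ l₂ := by rw [hpe, mink4_bil]
    rw [hl₂, ← hsdef, hμ] at h5; rw [h5]; ring
  rw [hpl2] at hsign
  have hsign' : 0 ≤ r ↔ s ≤ -2 := by rw [hsign]; constructor <;> intro <;> linarith
  exact horo_endgame s r hs0 hc2 hsign'
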